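/- Let Z = (Z_k)_{k≥0} be a nested family of normed spaces over K. A strict expansion is asymptotically unique: if a sequence (v_n)_{n≥1} in Z_0 has two strict expansions in Z, say v_n ≈ v + Σ_{k∈N} Γ_{k,n} w_k with remainder vectors w_{k,n}, and v_n ≈ v' + Σ_{k∈N'} Γ'_{k,n} w'_k with remainder vectors w'_{k,n}, then N = N', v = v', w_k = w'_k for all k ∈ N, and for each k ∈ N there is an integer M_k ≥ 1 such that Γ_{k,n} = Γ'_{k,n} and w_{k,n} = w'_{k,n} for all n ≥ M_k. -/
import Mathlib


open Filter

section ExpansionDefs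

variable (𝕜 : Type*) [RCLike 𝕜] {E : Type*} [AddCommGroup E] [Module 𝕜 E]

/-- The set `S ⊆ E`, equipped with the norm function `nrm`, is a normed space over `𝕜`. -/
def IsNormedSubspace (S : Set E) (nrm : E → ℝ) : Prop :=
  (0 : E) ∈ S ∧ (∀ x ∈ S, ∀ y ∈ S, x + y ∈ S) ∧ (∀ c : 𝕜, ∀ x ∈ S, c • x ∈ S) ∧
    (∀ x ∈ S, 0 ≤ nrm x) ∧ (∀ x ∈ S, (nrm x = 0 ↔ x = 0)) ∧
    (∀ x ∈ S, ∀ y ∈ S, nrm (x + y) ≤ nrm x + nrm y) ∧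
    ∀ c : 𝕜, ∀ x ∈ S, nrm (c • x) = ‖c‖ * nrm x

/-- `Z` together with the norms `nrm` is a nested family
`Z₀ ⊆ Z₁ ⊆ ⋯` of normed spaces over `𝕜` with continuous embeddings. -/
def IsNestedFamily (Z : ℕ → Set E) (nrm : ℕ → E → ℝ) : Prop :=
  (∀ k, IsNormedSubspace 𝕜 (Z k) (nrm k)) ∧ (∀ k, Z k ⊆ Z (k + 1)) ∧
    ∀ k, ∃ C > 0, ∀ x ∈ Z k, nrm (k + 1) x ≤ C * nrm k x

/-- Every embedding `Z k ⊆ Z (k+1)` is compact: every bounded sequence in `Z k`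
has a subsequence converging, in the norm of `Z (k+1)`, to an element of `Z (k+1)`. -/
def HasCompactEmbeddings {E : Type*} [AddCommGroup E] (Z : ℕ → Set E) (nrm : ℕ → E → ℝ) :
    Prop :=
  ∀ (k : ℕ) (u : ℕ → E), (∀ n, u n ∈ Z k) → (∃ M, ∀ n, nrm k (u n) ≤ M) →
    ∃ ψ : ℕ → ℕ, StrictMono ψ ∧
      ∃ x ∈ Z (k + 1), Tendsto (fun n => nrm (k + 1) (u (ψ n) - x)) atTop (nhds 0)

/-- The partial sum `∑_{j=1}^m Γ_{j,n} w_j` (real coefficients acting through `𝕜`). -/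
noncomputable def expPartialSum (w : ℕ → E) (Γ : ℕ → ℕ → ℝ) (m n : ℕ) : E :=
  ∑ j ∈ Finset.Icc 1 m, algebraMap ℝ 𝕜 (Γ j n) • w j

/-- Case (I) of a strict expansion: the trivial expansion. -/
def StrictCaseI {E : Type*} [AddCommGroup E] (Z : ℕ → Set E) (v : ℕ → E) (c : E) : Prop :=
  c ∈ Z 0 ∧ ∀ n, v n = c

/-- Case (II) of a strict expansion: a finite expansion with `K0 ≥ 1` terms. -/
def StrictCaseII (Z : ℕ → Set E) (nrm : ℕ → E → ℝ) (v : ℕ → E) (c : E) (K0 : ℕ)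
    (w : ℕ → E) (wn : ℕ → ℕ → E) (Γ : ℕ → ℕ → ℝ) : Prop :=
  1 ≤ K0 ∧ c ∈ Z 0 ∧
    (∀ k, 1 ≤ k → k ≤ K0 → w k ∈ Z k) ∧
    (∀ k, 1 ≤ k → k ≤ K0 → ∀ n, wn k n ∈ Z (k - 1)) ∧
    (∀ k, 1 ≤ k → k ≤ K0 → ∀ n, 0 < Γ k n) ∧
    Tendsto (fun n => Γ 1 n) atTop (nhds 0) ∧
    (∀ k, 1 ≤ k → k < K0 → Tendsto (fun n => Γ (k + 1) n / Γ k n) atTop (nhds 0)) ∧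
    (∀ k, 1 ≤ k → k ≤ K0 → Tendsto (fun n => nrm k (wn k n - w k)) atTop (nhds 0)) ∧
    (∀ k, 1 ≤ k → k ≤ K0 → ∀ n, nrm (k - 1) (wn k n) = 1) ∧
    (∀ k, 1 ≤ k → k ≤ K0 → ∀ n,
      v n = c + expPartialSum 𝕜 w Γ (k - 1) n + algebraMap ℝ 𝕜 (Γ k n) • wn k n) ∧
    ∀ n, wn K0 n = w K0

/-- Case (III) of a strict expansion: an infinite expansion. -/
def StrictCaseIII (Z : ℕ → Set E) (nrm : ℕ → E → ℝ) (v : ℕ → E) (c : E)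
    (w : ℕ → E) (wn : ℕ → ℕ → E) (Γ : ℕ → ℕ → ℝ) (Nk : ℕ → ℕ) : Prop :=
  c ∈ Z 0 ∧
    (∀ k, 1 ≤ k → w k ∈ Z k) ∧
    (∀ k, 1 ≤ k → ∀ n, wn k n ∈ Z (k - 1)) ∧
    (∀ k, 1 ≤ k → ∀ n, 0 < Γ k n) ∧
    (∀ k, 1 ≤ k → 1 ≤ Nk k) ∧
    Tendsto (fun n => Γ 1 n) atTop (nhds 0) ∧
    (∀ k, 1 ≤ k → Tendsto (fun n => Γ (k + 1) n / Γ k n) atTop (nhds 0)) ∧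
    (∀ k, 1 ≤ k → Tendsto (fun n => nrm k (wn k n - w k)) atTop (nhds 0)) ∧
    (∀ k, 1 ≤ k → ∀ n,
      v n = c + expPartialSum 𝕜 w Γ (k - 1) n + algebraMap ℝ 𝕜 (Γ k n) • wn k n) ∧
    ∀ k, 1 ≤ k → ∀ n, Nk k ≤ n → nrm (k - 1) (wn k n) = 1

/-- The strict expansion `v_n ≈ c + ∑_{k ∈ N} Γ_{k,n} w_k` with explicit data:
the index set `N` is `∅` in case (I), `{1, …, K0}` in case (II) and `{k | k ≥ 1}`
in case (III). -/
def StrictExpansionWith (Z : ℕ → Set E) (nrm : ℕ → E → ℝ) (v : ℕ → E) (c : E) (N : Set ℕ)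
    (w : ℕ → E) (wn : ℕ → ℕ → E) (Γ : ℕ → ℕ → ℝ) (Nk : ℕ → ℕ) : Prop :=
  (N = ∅ ∧ StrictCaseI Z v c) ∨
    (∃ K0 : ℕ, N = Set.Icc 1 K0 ∧ StrictCaseII 𝕜 Z nrm v c K0 w wn Γ) ∨
    (N = {k : ℕ | 1 ≤ k} ∧ StrictCaseIII 𝕜 Z nrm v c w wn Γ Nk)

/-- `v` possesses a strict expansion in the nested family `(Z, nrm)`. -/
def HasStrictExpansion (Z : ℕ → Set E) (nrm : ℕ → E → ℝ) (v : ℕ → E) : Prop :=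
  ∃ (c : E) (N : Set ℕ) (w : ℕ → E) (wn : ℕ → ℕ → E) (Γ : ℕ → ℕ → ℝ) (Nk : ℕ → ℕ),
    StrictExpansionWith 𝕜 Z nrm v c N w wn Γ Nk

/-- Case (II) of a relaxed expansion: unit-norm conditions dropped, `w K0 ≠ 0` required. -/
def RelaxedCaseII (Z : ℕ → Set E) (nrm : ℕ → E → ℝ) (v : ℕ → E) (c : E) (K0 : ℕ)
    (w : ℕ → E) (wn : ℕ → ℕ → E) (Γ : ℕ → ℕ → ℝ) : Prop :=
  1 ≤ K0 ∧ c ∈ Z 0 ∧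
    (∀ k, 1 ≤ k → k ≤ K0 → w k ∈ Z k) ∧
    (∀ k, 1 ≤ k → k ≤ K0 → ∀ n, wn k n ∈ Z (k - 1)) ∧
    (∀ k, 1 ≤ k → k ≤ K0 → ∀ n, 0 < Γ k n) ∧
    Tendsto (fun n => Γ 1 n) atTop (nhds 0) ∧
    (∀ k, 1 ≤ k → k < K0 → Tendsto (fun n => Γ (k + 1) n / Γ k n) atTop (nhds 0)) ∧
    (∀ k, 1 ≤ k → k ≤ K0 → Tendsto (fun n => nrm k (wn k n - w k)) atTop (nhds 0)) ∧
    (∀ k, 1 ≤ k → k ≤ K0 → ∀ n,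
      v n = c + expPartialSum 𝕜 w Γ (k - 1) n + algebraMap ℝ 𝕜 (Γ k n) • wn k n) ∧
    (∀ n, wn K0 n = w K0) ∧ w K0 ≠ 0

/-- Case (III) of a relaxed expansion: unit-norm conditions dropped. -/
def RelaxedCaseIII (Z : ℕ → Set E) (nrm : ℕ → E → ℝ) (v : ℕ → E) (c : E)
    (w : ℕ → E) (wn : ℕ → ℕ → E) (Γ : ℕ → ℕ → ℝ) : Prop :=
  c ∈ Z 0 ∧
    (∀ k, 1 ≤ k → w k ∈ Z k) ∧
    (∀ k, 1 ≤ k → ∀ n, wn k n ∈ Z (k - 1)) ∧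
    (∀ k, 1 ≤ k → ∀ n, 0 < Γ k n) ∧
    Tendsto (fun n => Γ 1 n) atTop (nhds 0) ∧
    (∀ k, 1 ≤ k → Tendsto (fun n => Γ (k + 1) n / Γ k n) atTop (nhds 0)) ∧
    (∀ k, 1 ≤ k → Tendsto (fun n => nrm k (wn k n - w k)) atTop (nhds 0)) ∧
    ∀ k, 1 ≤ k → ∀ n,
      v n = c + expPartialSum 𝕜 w Γ (k - 1) n + algebraMap ℝ 𝕜 (Γ k n) • wn k n

/-- A relaxed expansion `v_n ≈ c + ∑_{k ∈ N} Γ_{k,n} w_k` with explicit data. -/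
def RelaxedExpansionWith (Z : ℕ → Set E) (nrm : ℕ → E → ℝ) (v : ℕ → E) (c : E) (N : Set ℕ)
    (w : ℕ → E) (wn : ℕ → ℕ → E) (Γ : ℕ → ℕ → ℝ) : Prop :=
  (N = ∅ ∧ StrictCaseI Z v c) ∨
    (∃ K0 : ℕ, N = Set.Icc 1 K0 ∧ RelaxedCaseII 𝕜 Z nrm v c K0 w wn Γ) ∨
    (N = {k : ℕ | 1 ≤ k} ∧ RelaxedCaseIII 𝕜 Z nrm v c w wn Γ)

/-- `v` has a unitary expansion with limit `c`: a relaxed expansion in which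
`‖w_k‖_{Z_k} = 1` for every `k ∈ N`. -/
def UnitaryExpansionFrom (Z : ℕ → Set E) (nrm : ℕ → E → ℝ) (v : ℕ → E) (c : E) : Prop :=
  ∃ (N : Set ℕ) (w : ℕ → E) (wn : ℕ → ℕ → E) (Γ : ℕ → ℕ → ℝ),
    RelaxedExpansionWith 𝕜 Z nrm v c N w wn Γ ∧ ∀ k ∈ N, nrm k (w k) = 1

/-- `v` has a degenerate expansion with limit `c`: an infinite relaxed expansion
in which either all `w_k = 0`, or `‖w_k‖_{Z_k} = 1` for `1 ≤ k ≤ N0` and `w_k = 0`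
for `k > N0`. -/
def DegenerateExpansionFrom (Z : ℕ → Set E) (nrm : ℕ → E → ℝ) (v : ℕ → E) (c : E) : Prop :=
  ∃ (w : ℕ → E) (wn : ℕ → ℕ → E) (Γ : ℕ → ℕ → ℝ),
    RelaxedCaseIII 𝕜 Z nrm v c w wn Γ ∧
      ((∀ k, 1 ≤ k → w k = 0) ∨
        ∃ N0 : ℕ, 1 ≤ N0 ∧ (∀ k, 1 ≤ k → k ≤ N0 → nrm k (w k) = 1) ∧ ∀ k, N0 < k → w k = 0)

end ExpansionDefs
section StrictUniqueAux

variable {𝕜 : Type*} [RCLike 𝕜] {E : Type*} [AddCommGroup E] [Module 𝕜 E]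

/-- Auxiliary: common consequences of the nontrivial cases (II and III) of a
strict expansion, packaged uniformly over the index set `N`. -/
structure SEUGood (𝕜 : Type*) [RCLike 𝕜] {E : Type*} [AddCommGroup E] [Module 𝕜 E]
    (Z : ℕ → Set E) (nrm : ℕ → E → ℝ) (v : ℕ → E) (c : E) (N : Set ℕ)
    (w : ℕ → E) (wn : ℕ → ℕ → E) (Γ : ℕ → ℕ → ℝ) : Prop where
  cmem : c ∈ Z 0
  wmem : ∀ k ∈ N, w k ∈ Z k
  wnmem : ∀ k ∈ N, ∀ n, wn k n ∈ Z (k - 1)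
  gpos : ∀ k ∈ N, ∀ n, 0 < Γ k n
  g1 : Tendsto (fun n => Γ 1 n) atTop (nhds 0)
  conv : ∀ k ∈ N, Tendsto (fun n => nrm k (wn k n - w k)) atTop (nhds 0)
  unit : ∀ k ∈ N, ∀ᶠ n in atTop, nrm (k - 1) (wn k n) = 1
  dec : ∀ k ∈ N, ∀ n,
    v n = c + expPartialSum 𝕜 w Γ (k - 1) n + algebraMap ℝ 𝕜 (Γ k n) • wn k n
  one_mem : (1 : ℕ) ∈ N
  down : ∀ k, 1 ≤ k → k + 1 ∈ N → k ∈ N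
  ge_one : ∀ k ∈ N, 1 ≤ k

variable {Z : ℕ → Set E} {nrm : ℕ → E → ℝ} {S : Set E} {nr : E → ℝ}

lemma seu_neg_mem (h : IsNormedSubspace 𝕜 S nr) {x : E} (hx : x ∈ S) : -x ∈ S := by
  simpa using h.2.2.1 (-1 : 𝕜) x hx

lemma seu_sub_mem (h : IsNormedSubspace 𝕜 S nr) {x y : E} (hx : x ∈ S) (hy : y ∈ S) :
    x - y ∈ S := by
  simpa [sub_eq_add_neg] using h.2.1 x hx (-y) (seu_neg_mem h hy)

lemma seu_smul_real (h : IsNormedSubspace 𝕜 S nr) (a : ℝ) {x : E} (hx : x ∈ S) :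
    nr (algebraMap ℝ 𝕜 a • x) = |a| * nr x := by
  rw [h.2.2.2.2.2.2 _ x hx, RCLike.algebraMap_eq_ofReal, RCLike.norm_ofReal]

lemma seu_nrm_neg (h : IsNormedSubspace 𝕜 S nr) {x : E} (hx : x ∈ S) : nr (-x) = nr x := by
  have := h.2.2.2.2.2.2 (-1 : 𝕜) x hx
  simpa using this

lemma seu_eq_zero_of_le (h : IsNormedSubspace 𝕜 S nr) {x : E} (hx : x ∈ S)
    {f : ℕ → ℝ} (hf : Tendsto f atTop (nhds 0))
    (hb : ∀ᶠ n in atTop, nr x ≤ f n) : x = 0 := by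
  have h1 : nr x ≤ 0 := ge_of_tendsto hf hb
  have h2 : 0 ≤ nr x := h.2.2.2.1 x hx
  exact (h.2.2.2.2.1 x hx).mp (le_antisymm h1 h2)

lemma seu_Zmono (hfam : IsNestedFamily 𝕜 Z nrm) {j k : ℕ} (h : j ≤ k) : Z j ⊆ Z k := by
  induction k with
  | zero => rw [Nat.le_zero.mp h]
  | succ m ih =>
    rcases eq_or_lt_of_le h with rfl | hlt
    · exact subset_rfl
    · exact fun x hx => hfam.2.1 m (ih (Nat.lt_succ_iff.mp hlt) hx)

lemma seu_eps_zero (w : ℕ → E) (Γ : ℕ → ℕ → ℝ) (n : ℕ) :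
    expPartialSum 𝕜 w Γ 0 n = 0 := by
  unfold expPartialSum
  rw [Finset.Icc_eq_empty (by omega), Finset.sum_empty]

lemma seu_eps_succ (w : ℕ → E) (Γ : ℕ → ℕ → ℝ) (k n : ℕ) :
    expPartialSum 𝕜 w Γ (k + 1) n
      = expPartialSum 𝕜 w Γ k n + algebraMap ℝ 𝕜 (Γ (k + 1) n) • w (k + 1) := by
  unfold expPartialSum
  rw [Finset.sum_Icc_succ_top (by omega)]

lemma seu_cancel_aux {G : Type*} [AddCommGroup G] {c S A B C : G}
    (h : c + S + A = c + (S + B) + C) : C = A - B := by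
  have h2 : C = (c + S + A) - (c + (S + B)) := by rw [h]; abel
  rw [h2]; abel

variable {v : ℕ → E} {c c' : E} {N N' : Set ℕ} {w w' : ℕ → E} {wn wn' : ℕ → ℕ → E}
  {Γ Γ' : ℕ → ℕ → ℝ}

lemma seu_v_sub (hg : SEUGood 𝕜 Z nrm v c N w wn Γ) (n : ℕ) :
    v n - c = algebraMap ℝ 𝕜 (Γ 1 n) • wn 1 n := by
  rw [hg.dec 1 hg.one_mem n]
  simp only [Nat.sub_self, seu_eps_zero]
  abel

lemma seu_nrm_v_sub (hfam : IsNestedFamily 𝕜 Z nrm) (hg : SEUGood 𝕜 Z nrm v c N w wn Γ) :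
    ∀ᶠ n in atTop, nrm 0 (v n - c) = Γ 1 n := by
  filter_upwards [hg.unit 1 hg.one_mem] with n hu
  simp only [Nat.sub_self] at hu
  rw [seu_v_sub hg n, seu_smul_real (hfam.1 0) _ (hg.wnmem 1 hg.one_mem n), hu, mul_one,
    abs_of_pos (hg.gpos 1 hg.one_mem n)]

lemma seu_limit_eq (hfam : IsNestedFamily 𝕜 Z nrm)
    (hg : SEUGood 𝕜 Z nrm v c N w wn Γ) (hg' : SEUGood 𝕜 Z nrm v c' N' w' wn' Γ') :
    c = c' := by
  have hS := hfam.1 0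
  have hb : ∀ᶠ n in atTop, nrm 0 (c - c') ≤ Γ 1 n + Γ' 1 n := by
    filter_upwards [seu_nrm_v_sub hfam hg, seu_nrm_v_sub hfam hg'] with n h1 h2
    have m1 : v n - c ∈ Z 0 := by
      rw [seu_v_sub hg n]; exact hS.2.2.1 _ _ (hg.wnmem 1 hg.one_mem n)
    have m2 : v n - c' ∈ Z 0 := by
      rw [seu_v_sub hg' n]; exact hS.2.2.1 _ _ (hg'.wnmem 1 hg'.one_mem n)
    have key : c - c' = -(v n - c) + (v n - c') := by abel
    calc nrm 0 (c - c') = nrm 0 (-(v n - c) + (v n - c')) := by rw [key]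
      _ ≤ nrm 0 (-(v n - c)) + nrm 0 (v n - c') :=
          hS.2.2.2.2.2.1 _ (seu_neg_mem hS m1) _ m2
      _ = nrm 0 (v n - c) + nrm 0 (v n - c') := by rw [seu_nrm_neg hS m1]
      _ = Γ 1 n + Γ' 1 n := by rw [h1, h2]
  have h0 := seu_eq_zero_of_le hS (seu_sub_mem hS hg.cmem hg'.cmem)
    (by simpa using hg.g1.add hg'.g1) hb
  exact sub_eq_zero.mp h0

lemma seu_caseI_absurd (hfam : IsNestedFamily 𝕜 Z nrm)
    (hg' : SEUGood 𝕜 Z nrm v c' N' w' wn' Γ') {c : E} (hvc : ∀ n, v n = c) : False := by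
  have hev : ∀ᶠ n in atTop, Γ' 1 n = nrm 0 (c - c') := by
    filter_upwards [seu_nrm_v_sub hfam hg'] with n h
    rw [← h, hvc n]
  have hconst : Tendsto (fun n => Γ' 1 n) atTop (nhds (nrm 0 (c - c'))) :=
    Tendsto.congr' (hev.mono fun n h => h.symm) tendsto_const_nhds
  have h0 : nrm 0 (c - c') = 0 := tendsto_nhds_unique hconst hg'.g1
  obtain ⟨n, hn⟩ := hev.exists
  have hp := hg'.gpos 1 hg'.one_mem n
  rw [hn, h0] at hp
  exact lt_irrefl 0 hp

end StrictUniqueAux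
section StrictUniqueAux2

variable {𝕜 : Type*} [RCLike 𝕜] {E : Type*} [AddCommGroup E] [Module 𝕜 E]
variable {Z : ℕ → Set E} {nrm : ℕ → E → ℝ}
variable {v : ℕ → E} {c c' : E} {N N' : Set ℕ} {w w' : ℕ → E} {wn wn' : ℕ → ℕ → E}
  {Γ Γ' : ℕ → ℕ → ℝ}

lemma seu_resid_succ (hg : SEUGood 𝕜 Z nrm v c N w wn Γ) {k : ℕ} (hk : 1 ≤ k)
    (hkN : k ∈ N) (hk1 : k + 1 ∈ N) (n : ℕ) :
    algebraMap ℝ 𝕜 (Γ (k + 1) n) • wn (k + 1) n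
      = algebraMap ℝ 𝕜 (Γ k n) • wn k n - algebraMap ℝ 𝕜 (Γ k n) • w k := by
  obtain ⟨m, rfl⟩ : ∃ m, k = m + 1 := ⟨k - 1, by omega⟩
  have h1 := hg.dec (m + 1) hkN n
  have h2 := hg.dec (m + 1 + 1) hk1 n
  rw [Nat.add_sub_cancel] at h1 h2
  rw [seu_eps_succ] at h2
  exact seu_cancel_aux (h1.symm.trans h2)

lemma seu_step (hfam : IsNestedFamily 𝕜 Z nrm)
    (hg : SEUGood 𝕜 Z nrm v c N w wn Γ) (hg' : SEUGood 𝕜 Z nrm v c' N' w' wn' Γ')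
    {k : ℕ} (hkN : k ∈ N) (hkN' : k ∈ N')
    (hres : ∀ᶠ n in atTop,
      algebraMap ℝ 𝕜 (Γ k n) • wn k n = algebraMap ℝ 𝕜 (Γ' k n) • wn' k n) :
    (∀ᶠ n in atTop, Γ k n = Γ' k n ∧ wn k n = wn' k n) ∧ w k = w' k := by
  have hk1 : 1 ≤ k := hg.ge_one k hkN
  have hS := hfam.1 (k - 1)
  have hSk := hfam.1 k
  have hev : ∀ᶠ n in atTop, Γ k n = Γ' k n ∧ wn k n = wn' k n := by
    filter_upwards [hres, hg.unit k hkN, hg'.unit k hkN'] with n h hu hu'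
    have e1 : nrm (k - 1) (algebraMap ℝ 𝕜 (Γ k n) • wn k n) = Γ k n := by
      rw [seu_smul_real hS _ (hg.wnmem k hkN n), hu, mul_one,
        abs_of_pos (hg.gpos k hkN n)]
    have e2 : nrm (k - 1) (algebraMap ℝ 𝕜 (Γ' k n) • wn' k n) = Γ' k n := by
      rw [seu_smul_real hS _ (hg'.wnmem k hkN' n), hu', mul_one,
        abs_of_pos (hg'.gpos k hkN' n)]
    have hΓ : Γ k n = Γ' k n := by rw [← e1, ← e2, h]
    refine ⟨hΓ, ?_⟩
    rw [← hΓ] at h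
    have hne : algebraMap ℝ 𝕜 (Γ k n) ≠ 0 := by
      simpa using (hg.gpos k hkN n).ne'
    have h3 := congrArg (fun z => (algebraMap ℝ 𝕜 (Γ k n))⁻¹ • z) h
    simpa [inv_smul_smul₀ hne] using h3
  refine ⟨hev, ?_⟩
  have hmemw : w k ∈ Z k := hg.wmem k hkN
  have hmemw' : w' k ∈ Z k := hg'.wmem k hkN'
  have hb : ∀ᶠ n in atTop,
      nrm k (w k - w' k) ≤ nrm k (wn k n - w k) + nrm k (wn' k n - w' k) := by
    filter_upwards [hev] with n hn
    have hwnk : wn k n ∈ Z k := seu_Zmono hfam (by omega) (hg.wnmem k hkN n)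
    have hwnk' : wn' k n ∈ Z k := seu_Zmono hfam (by omega) (hg'.wnmem k hkN' n)
    have m1 : wn k n - w k ∈ Z k := seu_sub_mem hSk hwnk hmemw
    have m2 : wn' k n - w' k ∈ Z k := seu_sub_mem hSk hwnk' hmemw'
    have key : w k - w' k = -(wn k n - w k) + (wn' k n - w' k) := by
      rw [← hn.2]; abel
    calc nrm k (w k - w' k) = nrm k (-(wn k n - w k) + (wn' k n - w' k)) := by rw [key]
      _ ≤ nrm k (-(wn k n - w k)) + nrm k (wn' k n - w' k) :=
          hSk.2.2.2.2.2.1 _ (seu_neg_mem hSk m1) _ m2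
      _ = nrm k (wn k n - w k) + nrm k (wn' k n - w' k) := by rw [seu_nrm_neg hSk m1]
  have h0 := seu_eq_zero_of_le hSk (seu_sub_mem hSk hmemw hmemw')
    (by simpa using (hg.conv k hkN).add (hg'.conv k hkN')) hb
  exact sub_eq_zero.mp h0

lemma seu_resid_all (hfam : IsNestedFamily 𝕜 Z nrm)
    (hg : SEUGood 𝕜 Z nrm v c N w wn Γ) (hg' : SEUGood 𝕜 Z nrm v c N' w' wn' Γ') :
    ∀ k, k ∈ N → k ∈ N' →
      ∀ᶠ n in atTop,
        algebraMap ℝ 𝕜 (Γ k n) • wn k n = algebraMap ℝ 𝕜 (Γ' k n) • wn' k n := by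
  intro k
  induction k with
  | zero => intro h _; exact absurd (hg.ge_one 0 h) (by omega)
  | succ m ih =>
    intro hmN hmN'
    rcases Nat.eq_zero_or_pos m with rfl | hm
    · apply Eventually.of_forall
      intro n
      have h1 := hg.dec 1 hg.one_mem n
      have h2 := hg'.dec 1 hg'.one_mem n
      simp only [Nat.sub_self, seu_eps_zero, add_zero] at h1 h2
      have h3 := h1.symm.trans h2
      exact add_left_cancel h3
    · have hmN0 : m ∈ N := hg.down m hm hmN
      have hmN0' : m ∈ N' := hg'.down m hm hmN'
      have hres := ih hmN0 hmN0'
      obtain ⟨hev, hw⟩ := seu_step hfam hg hg' hmN0 hmN0' hres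
      filter_upwards [hres, hev] with n hr he
      rw [seu_resid_succ hg hm hmN0 hmN, seu_resid_succ hg' hm hmN0' hmN', hr, he.1, hw]

lemma seu_no_extra (hfam : IsNestedFamily 𝕜 Z nrm)
    (hg : SEUGood 𝕜 Z nrm v c N w wn Γ) (hg' : SEUGood 𝕜 Z nrm v c N' w' wn' Γ')
    {K0 : ℕ} (hK : K0 ∈ N) (hK' : K0 ∈ N') (hK1' : K0 + 1 ∈ N')
    (hconst : ∀ n, wn K0 n = w K0) : False := by
  have hK0ge : 1 ≤ K0 := hg.ge_one K0 hK
  have hres := seu_resid_all hfam hg hg' K0 hK hK'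
  obtain ⟨hev, hw⟩ := seu_step hfam hg hg' hK hK' hres
  have hzero : ∀ᶠ n in atTop, wn' (K0 + 1) n = 0 := by
    filter_upwards [hev] with n hn
    have h1 := seu_resid_succ hg' hK0ge hK' hK1' n
    have h2 : wn' K0 n = w' K0 := by rw [← hn.2, hconst n, hw]
    rw [h2, sub_self] at h1
    have hne : algebraMap ℝ 𝕜 (Γ' (K0 + 1) n) ≠ 0 := by
      simpa using (hg'.gpos (K0 + 1) hK1' n).ne'
    have h3 := congrArg (fun z => (algebraMap ℝ 𝕜 (Γ' (K0 + 1) n))⁻¹ • z) h1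
    simpa [inv_smul_smul₀ hne] using h3
  obtain ⟨n, h0, h1⟩ := (hzero.and (hg'.unit (K0 + 1) hK1')).exists
  rw [h0] at h1
  have hSK := hfam.1 (K0 + 1 - 1)
  have hz : nrm (K0 + 1 - 1) (0 : E) = 0 := (hSK.2.2.2.2.1 0 hSK.1).mpr rfl
  rw [hz] at h1
  exact absurd h1 (by norm_num)

lemma seu_good_of_II {K0 : ℕ} (h : StrictCaseII 𝕜 Z nrm v c K0 w wn Γ) :
    SEUGood 𝕜 Z nrm v c (Set.Icc 1 K0) w wn Γ := by
  obtain ⟨hK0, hc, hw, hwn, hΓ, hΓ1, _, hconv, hunit, hdec, _⟩ := h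
  refine ⟨hc, fun k hk => hw k hk.1 hk.2, fun k hk => hwn k hk.1 hk.2,
    fun k hk => hΓ k hk.1 hk.2, hΓ1, fun k hk => hconv k hk.1 hk.2,
    fun k hk => Eventually.of_forall (hunit k hk.1 hk.2),
    fun k hk => hdec k hk.1 hk.2, ⟨le_refl 1, hK0⟩,
    fun k hk h1 => ⟨hk, by exact le_trans (Nat.le_succ k) h1.2⟩,
    fun k hk => hk.1⟩

lemma seu_good_of_III {Nk : ℕ → ℕ} (h : StrictCaseIII 𝕜 Z nrm v c w wn Γ Nk) :
    SEUGood 𝕜 Z nrm v c {k : ℕ | 1 ≤ k} w wn Γ := by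
  obtain ⟨hc, hw, hwn, hΓ, _, hΓ1, _, hconv, hdec, hunit⟩ := h
  exact ⟨hc, fun k hk => hw k hk, fun k hk => hwn k hk, fun k hk => hΓ k hk, hΓ1,
    fun k hk => hconv k hk,
    fun k hk => eventually_atTop.mpr ⟨Nk k, fun n hn => hunit k hk n hn⟩,
    fun k hk => hdec k hk, (by simp : (1:ℕ) ∈ {k : ℕ | 1 ≤ k}), fun k hk _ => hk, fun k hk => hk⟩

end StrictUniqueAux2
/-- asymptotic uniqueness of strict expansions. -/
theorem strict_expansion_unique
    (𝕜 : Type*) [RCLike 𝕜] {E : Type*} [AddCommGroup E] [Module 𝕜 E]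
    (Z : ℕ → Set E) (nrm : ℕ → E → ℝ) (hfam : IsNestedFamily 𝕜 Z nrm)
    (v : ℕ → E) (hv : ∀ n, v n ∈ Z 0)
    (c c' : E) (N N' : Set ℕ) (w w' : ℕ → E) (wn wn' : ℕ → ℕ → E)
    (Γ Γ' : ℕ → ℕ → ℝ) (Nk Nk' : ℕ → ℕ)
    (h1 : StrictExpansionWith 𝕜 Z nrm v c N w wn Γ Nk)
    (h2 : StrictExpansionWith 𝕜 Z nrm v c' N' w' wn' Γ' Nk') :
    N = N' ∧ c = c' ∧ (∀ k ∈ N, w k = w' k) ∧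
      ∀ k ∈ N, ∃ M : ℕ, 1 ≤ M ∧ ∀ n, M ≤ n → Γ k n = Γ' k n ∧ wn k n = wn' k n := by
  rcases h1 with ⟨hN, hI⟩ | h1'
  · rcases h2 with ⟨hN', hI'⟩ | h2'
    · refine ⟨hN.trans hN'.symm, (hI.2 0).symm.trans (hI'.2 0), ?_, ?_⟩ <;>
        · intro k hk; rw [hN] at hk; exact absurd hk (Set.notMem_empty k)
    · exfalso
      have hg' : SEUGood 𝕜 Z nrm v c' N' w' wn' Γ' := by
        rcases h2' with ⟨K0, hN', hII⟩ | ⟨hN', hIII⟩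
        · rw [hN']; exact seu_good_of_II hII
        · rw [hN']; exact seu_good_of_III hIII
      exact seu_caseI_absurd hfam hg' hI.2
  · rcases h2 with ⟨hN', hI'⟩ | h2'
    · exfalso
      have hg : SEUGood 𝕜 Z nrm v c N w wn Γ := by
        rcases h1' with ⟨K0, hN, hII⟩ | ⟨hN, hIII⟩
        · rw [hN]; exact seu_good_of_II hII
        · rw [hN]; exact seu_good_of_III hIII
      exact seu_caseI_absurd hfam hg hI'.2
    · have hg : SEUGood 𝕜 Z nrm v c N w wn Γ := by
        rcases h1' with ⟨K0, hN, hII⟩ | ⟨hN, hIII⟩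
        · rw [hN]; exact seu_good_of_II hII
        · rw [hN]; exact seu_good_of_III hIII
      have hg' : SEUGood 𝕜 Z nrm v c' N' w' wn' Γ' := by
        rcases h2' with ⟨K0, hN', hII⟩ | ⟨hN', hIII⟩
        · rw [hN']; exact seu_good_of_II hII
        · rw [hN']; exact seu_good_of_III hIII
      have hcc : c = c' := seu_limit_eq hfam hg hg'
      subst hcc
      have hmain : ∀ k, k ∈ N → k ∈ N' →
          (∀ᶠ n in atTop, Γ k n = Γ' k n ∧ wn k n = wn' k n) ∧ w k = w' k :=
        fun k hk hk' => seu_step hfam hg hg' hk hk' (seu_resid_all hfam hg hg' k hk hk')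
      have hNN : N = N' := by
        rcases h1' with ⟨K0, hN, hII⟩ | ⟨hN, hIII⟩
        · rcases h2' with ⟨K0', hN', hII'⟩ | ⟨hN', hIII'⟩
          · subst hN; subst hN'
            have h1K : 1 ≤ K0 := hII.1
            have h1K' : 1 ≤ K0' := hII'.1
            have hc1 : ∀ n, wn K0 n = w K0 := hII.2.2.2.2.2.2.2.2.2.2
            have hc2 : ∀ n, wn' K0' n = w' K0' := hII'.2.2.2.2.2.2.2.2.2.2
            rcases lt_trichotomy K0 K0' with h | h | h
            · exact (seu_no_extra hfam hg hg' (Set.mem_Icc.mpr ⟨h1K, le_refl _⟩)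
                (Set.mem_Icc.mpr ⟨h1K, le_of_lt h⟩)
                (Set.mem_Icc.mpr ⟨by omega, by omega⟩) hc1).elim
            · rw [h]
            · exact (seu_no_extra hfam hg' hg (Set.mem_Icc.mpr ⟨h1K', le_refl _⟩)
                (Set.mem_Icc.mpr ⟨h1K', le_of_lt h⟩)
                (Set.mem_Icc.mpr ⟨by omega, by omega⟩) hc2).elim
          · subst hN; subst hN'
            have h1K : 1 ≤ K0 := hII.1
            have hc1 : ∀ n, wn K0 n = w K0 := hII.2.2.2.2.2.2.2.2.2.2
            exact (seu_no_extra hfam hg hg' (Set.mem_Icc.mpr ⟨h1K, le_refl _⟩)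
              (show 1 ≤ K0 from h1K) (show 1 ≤ K0 + 1 by omega) hc1).elim
        · rcases h2' with ⟨K0', hN', hII'⟩ | ⟨hN', hIII'⟩
          · subst hN; subst hN'
            have h1K' : 1 ≤ K0' := hII'.1
            have hc2 : ∀ n, wn' K0' n = w' K0' := hII'.2.2.2.2.2.2.2.2.2.2
            exact (seu_no_extra hfam hg' hg (Set.mem_Icc.mpr ⟨h1K', le_refl _⟩)
              (show 1 ≤ K0' from h1K') (show 1 ≤ K0' + 1 by omega) hc2).elim
          · rw [hN, hN']
      refine ⟨hNN, rfl, fun k hk => (hmain k hk (hNN ▸ hk)).2, fun k hk => ?_⟩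
      obtain ⟨M0, hM0⟩ := eventually_atTop.mp (hmain k hk (hNN ▸ hk)).1
      exact ⟨max M0 1, le_max_right _ _, fun n hn => hM0 n (le_trans (le_max_left _ _) hn)⟩
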